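/- Let A ∈ SL(2, ℤ) be a hyperbolic matrix acting on the torus 𝕋² = ℝ²/ℤ², and let φ be the induced homeomorphism on the quotient S = 𝕋²/{±id}. Then φ is not expansive: for every c > 0 there exist distinct points x, y ∈ S with d(φ^n(x), φ^n(y)) ≤ c for all n ∈ ℤ. -/

import Mathlib

set_option maxHeartbeats 1000000

lemma AC_dist_coe_le (u v : ℝ) :
    dist ((u : AddCircle (1:ℝ))) ((v : AddCircle (1:ℝ))) ≤ |u - v| := by
  rw [dist_eq_norm, ← AddCircle.coe_sub]
  simpa using QuotientAddGroup.norm_mk_le_norm (S := AddSubgroup.zmultiples (1:ℝ)) (m := u - v)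

lemma AC_coe_lin (m n : ℤ) (x y : ℝ) :
    (((m:ℝ)*x + (n:ℝ)*y : ℝ) : AddCircle (1:ℝ))
      = m • (x : AddCircle (1:ℝ)) + n • (y : AddCircle (1:ℝ)) := by
  rw [← zsmul_eq_mul, ← zsmul_eq_mul, AddCircle.coe_add,
    AddCircle.coe_zsmul, AddCircle.coe_zsmul]

/-- Linear map of the plane given by a 2x2 real matrix. -/
def gmap (ra rb rc rd : ℝ) : ℝ × ℝ → ℝ × ℝ :=
  fun u => (ra*u.1 + rb*u.2, rc*u.1 + rd*u.2)

lemma gmap_apply (ra rb rc rd : ℝ) (u : ℝ × ℝ) :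
    gmap ra rb rc rd u = (ra*u.1 + rb*u.2, rc*u.1 + rd*u.2) := rfl

/-- Projection of the plane onto the torus. -/
noncomputable def Pmap (u : ℝ × ℝ) : AddCircle (1:ℝ) × AddCircle (1:ℝ) :=
  ((u.1 : AddCircle (1:ℝ)), (u.2 : AddCircle (1:ℝ)))

open Polynomial in
lemma charpoly_eval_fin_two (M : Matrix (Fin 2) (Fin 2) ℂ) (z : ℂ) :
    M.charpoly.eval z = (z - M 0 0) * (z - M 1 1) - M 0 1 * M 1 0 := by
  rw [Matrix.charpoly, Matrix.det_fin_two]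
  simp [Matrix.charmatrix_apply_eq, Matrix.charmatrix_apply_ne]

lemma AC_small_int (r : ℝ) (h0 : r ≠ 0) (h1 : |r| < 1) :
    ((r : ℝ) : AddCircle (1:ℝ)) ≠ 0 := by
  intro h
  obtain ⟨n, hn⟩ := (AddCircle.coe_eq_zero_iff (1:ℝ)).mp h
  have hn' : (n : ℝ) = r := by simpa using hn
  have h2 : |(n:ℝ)| < 1 := hn' ▸ h1
  have h3 : (-1 : ℝ) < n ∧ (n : ℝ) < 1 := abs_lt.mp h2
  have h4 : n = 0 := by
    have ha : (-1:ℤ) < n := by exact_mod_cast h3.1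
    have hb : n < (1:ℤ) := by exact_mod_cast h3.2
    omega
  rw [h4] at hn'
  exact h0 (by simpa using hn'.symm)

lemma hyp_trace (t : ℝ) (h : ∀ z : ℂ, z^2 - (t:ℂ)*z + 1 = 0 → ‖z‖ ≠ 1) :
    4 < t^2 := by
  by_contra hle
  push_neg at hle
  set s := Real.sqrt (4 - t^2) with hsdef
  have hs : s^2 = 4 - t^2 := Real.sq_sqrt (by linarith)
  set z : ℂ := ⟨t/2, s/2⟩ with hzdef
  have hz : z^2 - (t:ℂ)*z + 1 = 0 := by
    apply Complex.ext <;>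
      simp [hzdef, pow_two, Complex.mul_re, Complex.mul_im] <;> nlinarith [hs]
  have h2 : ‖z‖ ^ 2 = 1 := by
    rw [Complex.sq_norm]
    simp [Complex.normSq_mk, hzdef]
    nlinarith [hs]
  have habs : ‖z‖ = 1 := by
    have h3 : (‖z‖ - 1) * (‖z‖ + 1) = 0 := by nlinarith
    rcases mul_eq_zero.mp h3 with h4 | h4
    · linarith
    · nlinarith [norm_nonneg z]
  exact h z hz habs

lemma exists_eig (t : ℝ) (h : 4 < t^2) : ∃ M : ℝ, M * (t - M) = 1 ∧ |M| < 1 := by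
  set s := Real.sqrt (t^2 - 4) with hsdef
  have hs : s^2 = t^2 - 4 := Real.sq_sqrt (by linarith)
  have hs0 : 0 ≤ s := Real.sqrt_nonneg _
  have hst : s < |t| := by nlinarith [sq_abs t, abs_nonneg t]
  rcases le_or_gt t 0 with htneg | htpos
  · have ht2 : t < -2 := by nlinarith
    have habs : |t| = -t := abs_of_nonpos htneg
    refine ⟨(t+s)/2, by linear_combination (-1/4) * hs, ?_⟩
    rw [abs_lt]
    refine ⟨by nlinarith [sq_nonneg (s + t + 2)], by nlinarith⟩
  · have ht2 : 2 < t := by nlinarith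
    have habs : |t| = t := abs_of_pos htpos
    refine ⟨(t-s)/2, by linear_combination (-1/4) * hs, ?_⟩
    rw [abs_lt]
    refine ⟨by nlinarith, by nlinarith [sq_nonneg (s - t + 2)]⟩

/-- The 2-torus `ℝ²/ℤ²`. -/
abbrev Torus2 : Type := AddCircle (1 : ℝ) × AddCircle (1 : ℝ)

/-- Iterates of a homeomorphism indexed by `ℤ`. -/
def iterZ {K : Type*} [TopologicalSpace K] (h : K ≃ₜ K) : ℤ → K → K
  | Int.ofNat n => (⇑h)^[n]
  | Int.negSucc n => (⇑h.symm)^[n + 1]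

/-- Let `A ∈ SL(2,ℤ)` be hyperbolic (no eigenvalue of modulus 1), acting on the torus
`𝕋²` via the homeomorphism `f`.  Then the induced homeomorphism `φ` on the quotient
`S = 𝕋²/±id` is not expansive: for every `c > 0` there are distinct points of `S`
(i.e. points `x, y` of `𝕋²` with `y ≠ ±x`) whose `φ`-orbits stay `c`-close for all
times (distance in `S` being the minimum of the distances between lifts). -/
theorem quotient_of_hyperbolic_torus_automorphism_not_expansive
    (A : Matrix (Fin 2) (Fin 2) ℤ) (hdet : A.det = 1)
    (hhyp : ∀ z : ℂ, (A.map (Int.cast : ℤ → ℂ)).charpoly.IsRoot z →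
      ‖z‖ ≠ 1)
    (f : Torus2 ≃ₜ Torus2)
    (hf : ∀ p : Torus2,
      f p = (A 0 0 • p.1 + A 0 1 • p.2, A 1 0 • p.1 + A 1 1 • p.2)) :
    ∀ c > (0 : ℝ), ∃ x y : Torus2, ¬(y = x ∨ y = -x) ∧
      ∀ n : ℤ,
        min (dist (iterZ f n x) (iterZ f n y))
            (dist (iterZ f n x) (-(iterZ f n y))) ≤ c := by
  intro c hc
  -- real entries of A
  set ra : ℝ := (A 0 0 : ℝ) with hra
  set rb : ℝ := (A 0 1 : ℝ) with hrb
  set rc : ℝ := (A 1 0 : ℝ) with hrc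
  set rd : ℝ := (A 1 1 : ℝ) with hrd
  have hdet2 : A 0 0 * A 1 1 - A 0 1 * A 1 0 = 1 := by
    rw [Matrix.det_fin_two] at hdet; exact hdet
  have hdetR : ra * rd - rb * rc = 1 := by
    rw [hra, hrb, hrc, hrd]; exact_mod_cast hdet2
  set t : ℝ := ra + rd with htdef
  -- hyperbolicity gives 4 < t^2
  have hroot : ∀ z : ℂ, z^2 - (t:ℂ)*z + 1 = 0 → ‖z‖ ≠ 1 := by
    intro z hz
    apply hhyp z
    unfold Polynomial.IsRoot
    rw [charpoly_eval_fin_two]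
    simp only [Matrix.map_apply]
    have hdetC : (A 0 0 : ℂ) * (A 1 1 : ℂ) - (A 0 1 : ℂ) * (A 1 0 : ℂ) = 1 := by
      exact_mod_cast hdet2
    have htC : (t : ℂ) = (A 0 0 : ℂ) + (A 1 1 : ℂ) := by
      rw [htdef, hra, hrd]; push_cast; ring
    rw [htC] at hz
    linear_combination hz + hdetC
  have ht2 : 4 < t^2 := hyp_trace t hroot
  obtain ⟨M, hM1, hM2⟩ := exists_eig t ht2
  -- b ≠ 0
  have hbZ : A 0 1 ≠ 0 := by
    intro hb0
    rw [hb0] at hdet2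
    simp at hdet2
    rcases Int.eq_one_or_neg_one_of_mul_eq_one' hdet2 with ⟨h1, h2⟩ | ⟨h1, h2⟩ <;>
      rw [htdef, hra, hrd, h1, h2] at ht2 <;> norm_num at ht2
  have hbne : rb ≠ 0 := by
    rw [hrb]
    exact_mod_cast hbZ
  rw [htdef] at hM1
  set L : ℝ := ra + rd - M with hLdef2
  -- eigen component identities
  have k2v : rc*rb + rd*(M - ra) = M*(M - ra) := by linear_combination hM1 - hdetR
  have k1w : rd*rb - rb*(L - ra) = M*rb := by rw [hLdef2]; ring
  have k2w : -rc*rb + ra*(L - ra) = M*(L - ra) := by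
    rw [hLdef2]; linear_combination hdetR - hM1
  -- choice of epsilon
  set B : ℝ := |rb| + |M - ra| + |L - ra| + 1 with hBdef
  have hB1 : 1 ≤ B := by
    have := abs_nonneg rb; have := abs_nonneg (M - ra); have := abs_nonneg (L - ra)
    rw [hBdef]; linarith
  have hB0 : 0 < B := by linarith
  have hrbB : |rb| ≤ B - 1 := by
    have := abs_nonneg (M - ra); have := abs_nonneg (L - ra)
    rw [hBdef]; linarith
  have hMaB : |M - ra| ≤ B - 1 := by
    have := abs_nonneg rb; have := abs_nonneg (L - ra)
    rw [hBdef]; linarith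
  have hLaB : |L - ra| ≤ B - 1 := by
    have := abs_nonneg rb; have := abs_nonneg (M - ra)
    rw [hBdef]; linarith
  have hmc : 0 < min c 1 := lt_min hc one_pos
  have hmc1 : min c 1 ≤ 1 := min_le_right _ _
  set ε : ℝ := min c 1 / (2*B) with hεdef
  have hε : 0 < ε := by rw [hεdef]; positivity
  have h2eB : 2*ε*B = min c 1 := by rw [hεdef]; field_simp
  -- the two points and the linear maps
  set p : ℝ × ℝ := (2*ε*rb, ε*(M + L - 2*ra)) with hpdef
  set q : ℝ × ℝ := (0, ε*(L - M)) with hqdef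
  have hgdef : ∀ u : ℝ × ℝ, gmap ra rb rc rd u = (ra*u.1 + rb*u.2, rc*u.1 + rd*u.2) :=
    fun u => rfl
  have hg'def : ∀ u : ℝ × ℝ, gmap rd (-rb) (-rc) ra u
      = (rd*u.1 + (-rb)*u.2, (-rc)*u.1 + ra*u.2) := fun u => rfl
  -- f corresponds to g, f.symm to g'
  have hfP : ∀ u : ℝ × ℝ, f (Pmap u) = Pmap (gmap ra rb rc rd u) := by
    intro u
    rw [hf]
    simp only [Pmap, gmap_apply, Prod.mk.injEq]
    constructor
    · rw [hra, hrb]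
      exact (AC_coe_lin (A 0 0) (A 0 1) u.1 u.2).symm
    · rw [hrc, hrd]
      exact (AC_coe_lin (A 1 0) (A 1 1) u.1 u.2).symm
  have hg'g : ∀ u : ℝ × ℝ, gmap ra rb rc rd (gmap rd (-rb) (-rc) ra u) = u := by
    intro u
    obtain ⟨u1, u2⟩ := u
    simp only [gmap_apply, Prod.mk.injEq]
    constructor
    · linear_combination u1 * hdetR
    · linear_combination u2 * hdetR
  have hfP' : ∀ u : ℝ × ℝ, f.symm (Pmap u)= Pmap (gmap rd (-rb) (-rc) ra u) := by
    intro u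
    have h1 : f (Pmap (gmap rd (-rb) (-rc) ra u)) = Pmap u := by rw [hfP (gmap rd (-rb) (-rc) ra u), hg'g u]
    rw [← h1, Homeomorph.symm_apply_apply]
  have hitf : ∀ (k : ℕ) (u : ℝ × ℝ), (⇑f)^[k] (Pmap u)= Pmap ((gmap ra rb rc rd)^[k] u) := by
    intro k
    induction k with
    | zero => intro u; simp
    | succ k ih =>
      intro u
      rw [Function.iterate_succ_apply', Function.iterate_succ_apply', ih, hfP]
  have hitf' : ∀ (k : ℕ) (u : ℝ × ℝ), (⇑f.symm)^[k] (Pmap u)= Pmap ((gmap rd (-rb) (-rc) ra)^[k] u) := by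
    intro k
    induction k with
    | zero => intro u; simp
    | succ k ih =>
      intro u
      rw [Function.iterate_succ_apply', Function.iterate_succ_apply', ih, hfP']
  -- evolution of difference and sum
  have hS : ∀ k : ℕ, ((gmap ra rb rc rd)^[k] p).1 - ((gmap ra rb rc rd)^[k] q).1 = 2*ε*M^k*rb ∧
      ((gmap ra rb rc rd)^[k] p).2 - ((gmap ra rb rc rd)^[k] q).2 = 2*ε*M^k*(M - ra) := by
    intro k
    induction k with
    | zero => refine ⟨?_, ?_⟩ <;> simp [hpdef, hqdef] <;> ring
    | succ k ih =>
      obtain ⟨ih1, ih2⟩ := ih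
      rw [Function.iterate_succ_apply', Function.iterate_succ_apply']
      simp only [gmap_apply]
      refine ⟨?_, ?_⟩
      · linear_combination ra*ih1 + rb*ih2
      · linear_combination rc*ih1 + rd*ih2 + (2*ε*M^k)*k2v
  have hU : ∀ k : ℕ, ((gmap rd (-rb) (-rc) ra)^[k] p).1 + ((gmap rd (-rb) (-rc) ra)^[k] q).1 = 2*ε*M^k*rb ∧
      ((gmap rd (-rb) (-rc) ra)^[k] p).2 + ((gmap rd (-rb) (-rc) ra)^[k] q).2 = 2*ε*M^k*(L - ra) := by
    intro k
    induction k with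
    | zero => refine ⟨?_, ?_⟩ <;> simp [hpdef, hqdef, hLdef2] <;> ring
    | succ k ih =>
      obtain ⟨ih1, ih2⟩ := ih
      rw [Function.iterate_succ_apply', Function.iterate_succ_apply']
      simp only [gmap_apply]
      refine ⟨?_, ?_⟩
      · linear_combination rd*ih1 - rb*ih2 + (2*ε*M^k)*k1w
      · linear_combination (-rc)*ih1 + ra*ih2 + (2*ε*M^k)*k2w
  -- the uniform bound
  have hbound : ∀ (k : ℕ) (r : ℝ), |r| ≤ B - 1 → |2*ε*M^k*r| ≤ c := by
    intro k r hr
    have hMk : |M|^k ≤ 1 := pow_le_one₀ (abs_nonneg M) hM2.le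
    have h1 : |2*ε*M^k*r| = 2*ε*(|M|^k*|r|) := by
      rw [abs_mul, abs_mul, abs_mul, abs_pow, abs_two, abs_of_pos hε]; ring
    rw [h1]
    have h2 : |M|^k*|r| ≤ B := by
      nlinarith [abs_nonneg r, pow_nonneg (abs_nonneg M) k]
    calc 2*ε*(|M|^k*|r|) ≤ 2*ε*B := by nlinarith
    _ = min c 1 := h2eB
    _ ≤ c := min_le_left _ _
  -- distance estimates through the projection
  have hdistP : ∀ u u' : ℝ × ℝ, dist (Pmap u) (Pmap u') ≤ max |u.1 - u'.1| |u.2 - u'.2| := by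
    intro u u'
    simp only [Pmap]
    rw [Prod.dist_eq]
    exact max_le_max (AC_dist_coe_le _ _) (AC_dist_coe_le _ _)
  have hdistN : ∀ u u' : ℝ × ℝ,
      dist (Pmap u) (-(Pmap u')) ≤ max |u.1 + u'.1| |u.2 + u'.2| := by
    intro u u'
    simp only [Pmap]
    have e : -((↑u'.1 : AddCircle (1:ℝ)), (↑u'.2 : AddCircle (1:ℝ)))
        = ((↑(-u'.1) : AddCircle (1:ℝ)), (↑(-u'.2) : AddCircle (1:ℝ))) := by
      rw [AddCircle.coe_neg, AddCircle.coe_neg]; rfl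
    rw [e, Prod.dist_eq]
    refine max_le_max ?_ ?_
    · have h := AC_dist_coe_le u.1 (-u'.1); rwa [sub_neg_eq_add] at h
    · have h := AC_dist_coe_le u.2 (-u'.2); rwa [sub_neg_eq_add] at h
  -- nontriviality data
  have hne0 : 2*ε*rb ≠ 0 := by
    apply mul_ne_zero _ hbne
    exact (by linarith : (0:ℝ) < 2*ε).ne'
  have hlt1 : |2*ε*rb| < 1 := by
    have h1 : |2*ε*rb| = 2*ε*|rb| := by
      rw [abs_mul, abs_mul, abs_two, abs_of_pos hε]
    rw [h1]
    nlinarith [mul_le_mul_of_nonneg_left hrbB (by linarith : (0:ℝ) ≤ 2*ε)]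
  refine ⟨Pmap p, Pmap q, ?_, ?_⟩
  · rintro (h | h)
    · have h2 : (↑p.1 : AddCircle (1:ℝ)) = ↑q.1 := by
        have h3 := congrArg Prod.fst h
        simp only [Pmap] at h3
        exact h3.symm
      have h1 : ((p.1 - q.1 : ℝ) : AddCircle (1:ℝ)) = 0 := by
        rw [AddCircle.coe_sub, h2, sub_self]
      have h3 : p.1 - q.1 = 2*ε*rb := by simp [hpdef, hqdef]
      exact AC_small_int _ hne0 hlt1 (h3 ▸ h1)
    · have h2 : (↑q.1 : AddCircle (1:ℝ)) = -(↑p.1 : AddCircle (1:ℝ)) := by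
        have h3 := congrArg Prod.fst h
        simp only [Pmap, Prod.fst_neg] at h3
        exact h3
      have h1 : ((p.1 + q.1 : ℝ) : AddCircle (1:ℝ)) = 0 := by
        rw [AddCircle.coe_add, h2, add_neg_cancel]
      have h3 : p.1 + q.1 = 2*ε*rb := by simp [hpdef, hqdef]
      exact AC_small_int _ hne0 hlt1 (h3 ▸ h1)
  · intro n
    cases n with
    | ofNat k =>
      have e1 : iterZ f (Int.ofNat k) (Pmap p)= Pmap ((gmap ra rb rc rd)^[k] p) := by
        simp only [iterZ]; exact hitf k p
      have e2 : iterZ f (Int.ofNat k) (Pmap q)= Pmap ((gmap ra rb rc rd)^[k] q) := by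
        simp only [iterZ]; exact hitf k q
      refine le_trans (min_le_left _ _) ?_
      rw [e1, e2]
      refine le_trans (hdistP _ _) ?_
      obtain ⟨hS1, hS2⟩ := hS k
      rw [hS1, hS2]
      exact max_le (hbound k rb hrbB) (hbound k (M - ra) hMaB)
    | negSucc m =>
      have e1 : iterZ f (Int.negSucc m) (Pmap p)= Pmap ((gmap rd (-rb) (-rc) ra)^[m+1] p) := by
        simp only [iterZ]; exact hitf' (m+1) p
      have e2 : iterZ f (Int.negSucc m) (Pmap q)= Pmap ((gmap rd (-rb) (-rc) ra)^[m+1] q) := by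
        simp only [iterZ]; exact hitf' (m+1) q
      refine le_trans (min_le_right _ _) ?_
      rw [e1, e2]
      refine le_trans (hdistN _ _) ?_
      obtain ⟨hU1, hU2⟩ := hU (m+1)
      rw [hU1, hU2]
      exact max_le (hbound (m+1) rb hrbB) (hbound (m+1) (L - ra) hLaB)
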